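/- For all real numbers a, b, c, m and s > 0, the exponentially tilted Gaussian–Φ convolution evaluates as ∫_ℝ (1/(s√(2π))) exp(−(x − m)²/(2s²)) e^{−bx} Φ(a x + c) dx = exp(−bm + b²s²/2) Φ((a(m − b s²) + c)/√(1 + a²s²)). -/

import Mathlib

open MeasureTheory

/-- The standard normal density `N(x) := exp(−x²/2)/√(2π)`. -/
noncomputable def stdNormalDensity (x : ℝ) : ℝ :=
  Real.exp (-x ^ 2 / 2) / Real.sqrt (2 * Real.pi)

/-- The standard normal CDF `Φ(x) := ∫_{−∞}^x N(u) du`. -/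
noncomputable def stdNormalCDF (x : ℝ) : ℝ :=
  ∫ u in Set.Iic x, stdNormalDensity u

open Real Set in
lemma continuous_stdNormalDensity : Continuous stdNormalDensity := by
  unfold stdNormalDensity
  exact (Real.continuous_exp.comp (by continuity)).div_const _

lemma stdNormalDensity_nonneg (x : ℝ) : 0 ≤ stdNormalDensity x :=
  div_nonneg (Real.exp_pos _).le (Real.sqrt_nonneg _)

lemma integrable_stdNormalDensity : Integrable stdNormalDensity := by
  have h : stdNormalDensity = fun x => Real.exp (-(1/2 : ℝ) * x ^ 2) * (Real.sqrt (2 * Real.pi))⁻¹ := by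
    funext x; unfold stdNormalDensity; rw [div_eq_mul_inv]; ring_nf
  rw [h]
  exact (integrable_exp_neg_mul_sq (by norm_num)).mul_const _

lemma integral_stdNormalDensity : ∫ x, stdNormalDensity x = 1 := by
  have h : ∀ x, stdNormalDensity x = Real.exp (-(1/2 : ℝ) * x ^ 2) * (Real.sqrt (2 * Real.pi))⁻¹ := by
    intro x; unfold stdNormalDensity; rw [div_eq_mul_inv]; ring_nf
  simp_rw [h]
  rw [integral_mul_const, integral_gaussian]
  have : Real.pi / (1/2 : ℝ) = 2 * Real.pi := by ring
  rw [this, mul_inv_cancel₀ (by positivity)]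

open Real Set in
-- Lemma D: scaled gaussian tail
lemma scaled_iic (σ cc : ℝ) (hσ : 0 < σ) :
    (∫ t, Set.indicator (Set.Iic cc)
      (fun t => Real.exp (-t ^ 2 / (2 * σ ^ 2)) / (σ * Real.sqrt (2 * Real.pi))) t)
    = stdNormalCDF (cc / σ) := by
  have key := MeasureTheory.Measure.integral_comp_mul_left
    (fun t => Set.indicator (Set.Iic cc)
      (fun t => Real.exp (-t ^ 2 / (2 * σ ^ 2)) / (σ * Real.sqrt (2 * Real.pi))) t) σ
  have hcomp : (fun x : ℝ => Set.indicator (Set.Iic cc)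
      (fun t => Real.exp (-t ^ 2 / (2 * σ ^ 2)) / (σ * Real.sqrt (2 * Real.pi))) (σ * x))
      = fun x : ℝ => Set.indicator (Set.Iic (cc / σ)) (fun u => stdNormalDensity u / σ) x := by
    funext x
    have hmem : σ * x ∈ Set.Iic cc ↔ x ∈ Set.Iic (cc / σ) := by
      simp only [Set.mem_Iic]
      rw [le_div_iff₀ hσ, mul_comm]
    by_cases hx : x ∈ Set.Iic (cc / σ)
    · rw [Set.indicator_of_mem (hmem.mpr hx), Set.indicator_of_mem hx]
      unfold stdNormalDensity
      rw [mul_pow]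
      rw [show (2 : ℝ) * σ ^ 2 = σ ^ 2 * 2 by ring]
      rw [show -(σ ^ 2 * x ^ 2) / (σ ^ 2 * 2) = -x ^ 2 / 2 by
        rw [neg_div, neg_div, mul_div_mul_left _ _ (by positivity)]]
      field_simp
    · rw [Set.indicator_of_notMem (fun h => hx (hmem.mp h)), Set.indicator_of_notMem hx]
  rw [hcomp] at key
  have h2 : (∫ x, Set.indicator (Set.Iic (cc / σ)) (fun u => stdNormalDensity u / σ) x)
      = (∫ x, Set.indicator (Set.Iic (cc / σ)) stdNormalDensity x) / σ := by
    rw [← integral_div]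
    congr 1
    funext x
    by_cases hx : x ∈ Set.Iic (cc / σ) <;>
      simp [Set.indicator_of_mem, Set.indicator_of_notMem, hx]
  rw [h2] at key
  rw [abs_of_pos (inv_pos.mpr hσ), smul_eq_mul] at key
  have h4 := key
  rw [div_eq_iff hσ.ne'] at h4
  have h3 : (∫ (t : ℝ), (Iic cc).indicator (fun t => rexp (-t ^ 2 / (2 * σ ^ 2)) / (σ * √(2 * π))) t)
      = ∫ x, (Iic (cc / σ)).indicator stdNormalDensity x := by
    rw [h4]; field_simp
  rw [h3]
  unfold stdNormalCDF
  rw [integral_indicator measurableSet_Iic]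

open Real Set in
lemma inner_gauss (A t : ℝ) :
    (∫ y, stdNormalDensity y * stdNormalDensity (t + A * y))
      = Real.exp (-t ^ 2 / (2 * (1 + A ^ 2))) / (Real.sqrt (1 + A ^ 2) * Real.sqrt (2 * Real.pi)) := by
  have hA : (0:ℝ) < 1 + A ^ 2 := by positivity
  have hpt : ∀ y, stdNormalDensity y * stdNormalDensity (t + A * y)
      = (Real.exp (-t ^ 2 / (2 * (1 + A ^ 2))) / (2 * Real.pi))
        * Real.exp (-((1 + A ^ 2)/2) * (y + A * t / (1 + A ^ 2)) ^ 2) := by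
    intro y
    unfold stdNormalDensity
    rw [div_mul_div_comm, ← Real.exp_add,
      Real.mul_self_sqrt (by positivity : (0:ℝ) ≤ 2 * Real.pi), div_mul_eq_mul_div,
      ← Real.exp_add]
    congr 1
    rw [Real.exp_eq_exp]
    field_simp
    ring
  simp_rw [hpt]
  rw [integral_const_mul]
  have hshift := integral_add_right_eq_self (μ := volume)
    (fun y => Real.exp (-((1 + A ^ 2)/2) * y ^ 2)) (A * t / (1 + A ^ 2))
  rw [hshift, integral_gaussian]
  rw [show Real.pi / ((1 + A ^ 2)/2) = (2 * Real.pi) / (1 + A ^ 2) by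
    rw [div_div_eq_mul_div]; ring_nf]
  rw [Real.sqrt_div (by positivity : (0:ℝ) ≤ 2 * Real.pi)]
  have h2 : Real.sqrt (2 * Real.pi) * Real.sqrt (2 * Real.pi) = 2 * Real.pi :=
    Real.mul_self_sqrt (by positivity)
  have hk : (0:ℝ) < Real.sqrt (1 + A ^ 2) := Real.sqrt_pos.mpr hA
  have hp : (0:ℝ) < Real.sqrt (2 * Real.pi) := Real.sqrt_pos.mpr (by positivity)
  rw [div_mul_div_comm, div_eq_div_iff (by positivity) (by positivity)]
  linear_combination (rexp (-t ^ 2 / (2 * (1 + A ^ 2))) * Real.sqrt (1 + A ^ 2)) * h2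

open Real Set in
lemma core (A C' : ℝ) :
    (∫ y, stdNormalDensity y * stdNormalCDF (A * y + C'))
      = stdNormalCDF (C' / Real.sqrt (1 + A ^ 2)) := by
  have hA : (0:ℝ) < 1 + A ^ 2 := by positivity
  have hΦ : ∀ y : ℝ, stdNormalCDF (A * y + C')
      = ∫ t, Set.indicator (Set.Iic C') (fun t => stdNormalDensity (t + A * y)) t := by
    intro y
    unfold stdNormalCDF
    rw [← integral_indicator measurableSet_Iic]
    rw [← integral_add_right_eq_self (μ := volume)
      (fun t => Set.indicator (Set.Iic (A * y + C')) stdNormalDensity t) (A * y)]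
    congr 1; funext t
    by_cases ht : t ≤ C'
    · rw [Set.indicator_of_mem (show t + A * y ∈ Set.Iic (A * y + C') by
        simp only [Set.mem_Iic]; linarith),
        Set.indicator_of_mem (Set.mem_Iic.mpr ht)]
    · rw [Set.indicator_of_notMem (show t + A * y ∉ Set.Iic (A * y + C') by
        simp only [Set.mem_Iic, not_le]; linarith),
        Set.indicator_of_notMem (by simpa using ht)]
  calc (∫ y, stdNormalDensity y * stdNormalCDF (A * y + C'))
      = ∫ y, ∫ t, stdNormalDensity y
          * Set.indicator (Set.Iic C') (fun t => stdNormalDensity (t + A * y)) t := by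
        simp_rw [hΦ, ← integral_const_mul]
    _ = ∫ t, ∫ y, stdNormalDensity y
          * Set.indicator (Set.Iic C') (fun t => stdNormalDensity (t + A * y)) t := by
        apply integral_integral_swap
        have hS : MeasurableSet {p : ℝ × ℝ | p.2 ≤ C'} :=
          measurable_snd measurableSet_Iic
        have hG : Continuous (fun p : ℝ × ℝ =>
            stdNormalDensity p.1 * stdNormalDensity (p.2 + A * p.1)) := by
          exact (continuous_stdNormalDensity.comp continuous_fst).mul
            (continuous_stdNormalDensity.comp (continuous_snd.add
              (continuous_const.mul continuous_fst)))
        have hGint : Integrable (fun p : ℝ × ℝ =>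
            stdNormalDensity p.1 * stdNormalDensity (p.2 + A * p.1))
            (volume.prod volume) := by
          rw [integrable_prod_iff hG.aestronglyMeasurable]
          constructor
          · filter_upwards with x
            exact (integrable_stdNormalDensity.comp_add_right (A * x)).const_mul _
          · have heq : (fun x => ∫ t, ‖stdNormalDensity x * stdNormalDensity (t + A * x)‖)
                = stdNormalDensity := by
              funext x
              have : ∀ t : ℝ, ‖stdNormalDensity x * stdNormalDensity (t + A * x)‖
                  = stdNormalDensity x * stdNormalDensity (t + A * x) := fun t =>
                Real.norm_of_nonneg (mul_nonneg (stdNormalDensity_nonneg _)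
                  (stdNormalDensity_nonneg _))
              simp_rw [this, integral_const_mul,
                integral_add_right_eq_self (μ := volume) stdNormalDensity (A * x),
                integral_stdNormalDensity, mul_one]
            rw [heq]
            exact integrable_stdNormalDensity
        have hFeq : (Function.uncurry fun y t => stdNormalDensity y
            * Set.indicator (Set.Iic C') (fun t => stdNormalDensity (t + A * y)) t)
            = Set.indicator {p : ℝ × ℝ | p.2 ≤ C'}
              (fun p => stdNormalDensity p.1 * stdNormalDensity (p.2 + A * p.1)) := by
          funext p
          by_cases hp : p.2 ≤ C'
          · simp [Function.uncurry, Set.indicator_of_mem, hp, Set.mem_Iic]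
          · simp [Function.uncurry, Set.indicator_of_notMem, hp, Set.mem_Iic]
        rw [hFeq]
        exact hGint.indicator hS
    _ = ∫ t, Set.indicator (Set.Iic C')
          (fun t => ∫ y, stdNormalDensity y * stdNormalDensity (t + A * y)) t := by
        congr 1; funext t
        by_cases ht : t ≤ C'
        · simp only [Set.indicator_of_mem (Set.mem_Iic.mpr ht)]
        · simp only [Set.indicator_of_notMem (show t ∉ Set.Iic C' by simpa using ht),
            mul_zero, integral_zero]
    _ = ∫ t, Set.indicator (Set.Iic C')
          (fun t => Real.exp (-t ^ 2 / (2 * Real.sqrt (1 + A ^ 2) ^ 2))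
            / (Real.sqrt (1 + A ^ 2) * Real.sqrt (2 * Real.pi))) t := by
        congr 1; funext t
        rw [Real.sq_sqrt hA.le]
        congr 1; funext u
        exact inner_gauss A u
    _ = stdNormalCDF (C' / Real.sqrt (1 + A ^ 2)) :=
        scaled_iic _ _ (Real.sqrt_pos.mpr hA)

/-- For reals `a, b, c, m` and `s > 0`, the exponentially tilted Gaussian–Φ convolution
evaluates as
`∫_ℝ (1/(s√(2π))) exp(−(x−m)²/(2s²)) e^{−bx} Φ(ax+c) dx
  = exp(−bm + b²s²/2) Φ((a(m − b s²) + c)/√(1 + a²s²))`. -/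
theorem tilted_gaussian_phi_convolution (a b c m s : ℝ) (hs : 0 < s) :
    (∫ x : ℝ, (1 / (s * Real.sqrt (2 * Real.pi)))
        * Real.exp (-(x - m) ^ 2 / (2 * s ^ 2)) * Real.exp (-b * x)
        * stdNormalCDF (a * x + c))
      = Real.exp (-b * m + b ^ 2 * s ^ 2 / 2)
        * stdNormalCDF ((a * (m - b * s ^ 2) + c) / Real.sqrt (1 + a ^ 2 * s ^ 2)) := by
  set m' : ℝ := m - b * s ^ 2 with hm'
  set C : ℝ := -b * m + b ^ 2 * s ^ 2 / 2 with hC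
  have htilt : ∀ x : ℝ, (1 / (s * Real.sqrt (2 * Real.pi)))
        * Real.exp (-(x - m) ^ 2 / (2 * s ^ 2)) * Real.exp (-b * x)
        * stdNormalCDF (a * x + c)
      = Real.exp C * ((1 / (s * Real.sqrt (2 * Real.pi)))
        * Real.exp (-(x - m') ^ 2 / (2 * s ^ 2)) * stdNormalCDF (a * x + c)) := by
    intro x
    have hexp : Real.exp (-(x - m) ^ 2 / (2 * s ^ 2)) * Real.exp (-b * x)
        = Real.exp C * Real.exp (-(x - m') ^ 2 / (2 * s ^ 2)) := by
      rw [← Real.exp_add, ← Real.exp_add]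
      congr 1
      rw [hm', hC]
      field_simp
      ring
    calc (1 / (s * Real.sqrt (2 * Real.pi)))
          * Real.exp (-(x - m) ^ 2 / (2 * s ^ 2)) * Real.exp (-b * x)
          * stdNormalCDF (a * x + c)
        = (1 / (s * Real.sqrt (2 * Real.pi)))
          * (Real.exp (-(x - m) ^ 2 / (2 * s ^ 2)) * Real.exp (-b * x))
          * stdNormalCDF (a * x + c) := by ring
      _ = _ := by rw [hexp]; ring
  simp_rw [htilt]
  rw [integral_const_mul]
  congr 1
  -- substitution x = s*y + m'
  set g : ℝ → ℝ := fun x => (1 / (s * Real.sqrt (2 * Real.pi)))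
      * Real.exp (-(x - m') ^ 2 / (2 * s ^ 2)) * stdNormalCDF (a * x + c) with hg
  have h1 : ∫ x, g (x + m') = ∫ x, g x := integral_add_right_eq_self (μ := volume) g m'
  have h2 : (∫ y, g (s * y + m')) = |s⁻¹| • ∫ x, g (x + m') := by
    have := MeasureTheory.Measure.integral_comp_mul_left (fun x => g (x + m')) s
    simpa using this
  have h3 : ∀ y : ℝ, g (s * y + m')
      = (stdNormalDensity y * stdNormalCDF (a * s * y + (a * m' + c))) / s := by
    intro y
    rw [hg]
    simp only []
    have e1 : -(s * y + m' - m') ^ 2 / (2 * s ^ 2) = -y ^ 2 / 2 := by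
      field_simp
      ring
    have e2 : a * (s * y + m') + c = a * s * y + (a * m' + c) := by ring
    rw [e1, e2]
    unfold stdNormalDensity
    field_simp
  have h4 : (∫ x, g x) = s * ∫ y, g (s * y + m') := by
    rw [h2, h1, abs_of_pos (inv_pos.mpr hs), smul_eq_mul]
    field_simp
  rw [h4]
  simp_rw [h3]
  rw [integral_div, mul_div_cancel₀ _ hs.ne']
  rw [core (a * s) (a * m' + c), mul_pow]
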